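/- arXiv:1605.01716 — 3 statements merged into one kernel-verified Lean document; each statement's English description precedes it below -/
import Mathlib

section
/- Let β_c = √(2 log 2) and let F : (0,∞) → ℝ be defined by F(β) = β²/2 if β ≤ β_c and F(β) = β β_c − log 2 if β > β_c. Then for every m with 0 < m ≤ 1, sup_{β>0} ( F(β) − β² m / 2 ) = (log 2)/m − log 2. -/
/-- For the limiting free energy `F` of the random energy model, the Legendre-type
supremum `sup_{β>0} (F(β) - β² m / 2)` equals `(log 2)/m - log 2` for every `0 < m ≤ 1`. -/
theorem REM_squared_free_energy
    (F : ℝ → ℝ)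
    (hF1 : ∀ β : ℝ, 0 < β → β ≤ Real.sqrt (2 * Real.log 2) → F β = β ^ 2 / 2)
    (hF2 : ∀ β : ℝ, Real.sqrt (2 * Real.log 2) < β →
      F β = β * Real.sqrt (2 * Real.log 2) - Real.log 2)
    (m : ℝ) (hm0 : 0 < m) (hm1 : m ≤ 1) :
    (⨆ β : Set.Ioi (0 : ℝ), (F β - (β : ℝ) ^ 2 * m / 2)) = Real.log 2 / m - Real.log 2 := by
  set L := Real.log 2 with hLdef
  set c := Real.sqrt (2 * L) with hcdef
  have hL : 0 < L := Real.log_pos one_lt_two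
  have hc2 : c ^ 2 = 2 * L := Real.sq_sqrt (by linarith)
  have hc : 0 < c := Real.sqrt_pos.mpr (by linarith)
  -- upper bound for every β > 0
  have hub : ∀ β : Set.Ioi (0 : ℝ), F β - (β : ℝ) ^ 2 * m / 2 ≤ L / m - L := by
    rintro ⟨β, hβ⟩
    simp only [Set.mem_Ioi] at hβ
    show F β - β ^ 2 * m / 2 ≤ L / m - L
    rcases le_or_gt β c with hle | hgt
    · rw [hF1 β hβ hle]
      have hβ2 : β ^ 2 ≤ 2 * L := by
        calc β ^ 2 ≤ c ^ 2 := by nlinarith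
        _ = 2 * L := hc2
      rw [div_sub' (ne_of_gt hm0), le_div_iff₀ hm0]
      nlinarith [sq_nonneg (1 - m), mul_pos hL hm0]
    · rw [hF2 β hgt]
      have key : β * c - β ^ 2 * m / 2 ≤ L / m := by
        rw [le_div_iff₀ hm0]
        nlinarith [sq_nonneg (β * m - c)]
      linarith
  -- the value is attained at β* = c / m
  have hβstar : (0 : ℝ) < c / m := div_pos hc hm0
  have hattain : F (c / m) - (c / m) ^ 2 * m / 2 = L / m - L := by
    rcases eq_or_lt_of_le hm1 with hm | hm
    · subst hm
      rw [div_one, hF1 c hc le_rfl]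
      field_simp
      ring
    · have hgt : c < c / m := by
        rw [lt_div_iff₀ hm0]; nlinarith
      rw [hF2 _ hgt]
      have h1 : (c / m) ^ 2 * m / 2 = L / m := by
        rw [div_pow, hc2]; field_simp
      have h2 : c / m * c = 2 * L / m := by
        rw [div_mul_eq_mul_div, mul_comm, ← pow_two, hc2]
      rw [h1, h2]
      field_simp
      ring
  refine le_antisymm (ciSup_le hub) ?_
  have : L / m - L = F ((⟨c / m, hβstar⟩ : Set.Ioi (0:ℝ)) : ℝ) -
      ((⟨c / m, hβstar⟩ : Set.Ioi (0:ℝ)) : ℝ) ^ 2 * m / 2 := hattain.symm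
  rw [this]
  exact le_ciSup ⟨L / m - L, Set.forall_mem_range.mpr hub⟩ _
end

section
/- Let β_c = √(2 log 2) and let F : (0,∞) → ℝ be defined by F(β) = β²/2 if β ≤ β_c and F(β) = β β_c − log 2 if β > β_c. Then the function β ↦ F(√β) is concave on (0,∞). -/
/-- The limiting free energy of the random energy model is concave as a function of
the squared temperature: `β ↦ F(√β)` is concave on `(0, ∞)`. -/
theorem REM_free_energy_concave_in_squared_temperature
    (F : ℝ → ℝ)
    (hF1 : ∀ β : ℝ, 0 < β → β ≤ Real.sqrt (2 * Real.log 2) → F β = β ^ 2 / 2)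
    (hF2 : ∀ β : ℝ, Real.sqrt (2 * Real.log 2) < β →
      F β = β * Real.sqrt (2 * Real.log 2) - Real.log 2) :
    ConcaveOn ℝ (Set.Ioi (0 : ℝ)) (fun b => F (Real.sqrt b)) := by
  set c := Real.log 2 with hc_def
  have hc : 0 < c := Real.log_pos (by norm_num)
  set βc := Real.sqrt (2 * c) with hβc_def
  have hβc : 0 < βc := Real.sqrt_pos.mpr (by linarith)
  have hβcsq : βc ^ 2 = 2 * c := Real.sq_sqrt (by linarith)
  -- key inequality: F (√b) ≤ b/(2s) + (s-1)c for all s ≥ 1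
  have hkey : ∀ s : ℝ, 1 ≤ s → ∀ b : ℝ, 0 < b →
      F (Real.sqrt b) ≤ b / (2 * s) + (s - 1) * c := by
    intro s hs b hb
    have hs0 : (0:ℝ) < s := by linarith
    have hsb : 0 < Real.sqrt b := Real.sqrt_pos.mpr hb
    have hsbsq : Real.sqrt b ^ 2 = b := Real.sq_sqrt hb.le
    rcases le_or_gt (Real.sqrt b) βc with h | h
    · rw [hF1 _ hsb h, hsbsq]
      have hb2c : b ≤ 2 * c := by nlinarith [hsbsq, hβcsq, h, hsb.le]
      rw [div_add' _ _ _ (ne_of_gt (by positivity : (0:ℝ) < 2 * s)),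
        div_le_div_iff₀ (by norm_num : (0:ℝ) < 2) (by positivity)]
      nlinarith [mul_nonneg (sub_nonneg.mpr hb2c) (sub_nonneg.mpr hs),
        mul_nonneg hc.le (sq_nonneg (s - 1))]
    · rw [hF2 _ h]
      rw [sub_le_iff_le_add]
      have : Real.sqrt b * βc - s * c ≤ b / (2 * s) := by
        rw [le_div_iff₀ (by positivity : (0:ℝ) < 2 * s)]
        have hs2 : s ^ 2 * βc ^ 2 = s ^ 2 * (2 * c) := by rw [hβcsq]
        nlinarith [sq_nonneg (Real.sqrt b - s * βc), hsbsq, hs2]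
      linarith
  -- equality at a well-chosen s
  have heq : ∀ b : ℝ, 0 < b → ∃ s : ℝ, 1 ≤ s ∧
      F (Real.sqrt b) = b / (2 * s) + (s - 1) * c := by
    intro b hb
    have hsb : 0 < Real.sqrt b := Real.sqrt_pos.mpr hb
    have hsbsq : Real.sqrt b ^ 2 = b := Real.sq_sqrt hb.le
    rcases le_or_gt (Real.sqrt b) βc with h | h
    · exact ⟨1, le_refl 1, by rw [hF1 _ hsb h, hsbsq]; ring⟩
    · refine ⟨Real.sqrt b / βc, ?_, ?_⟩
      · rw [le_div_iff₀ hβc]; linarith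
      · rw [hF2 _ h]
        have hβcne : βc ≠ 0 := ne_of_gt hβc
        have hsbne : Real.sqrt b ≠ 0 := ne_of_gt hsb
        field_simp
        nlinarith [hsbsq, hβcsq]
  refine ⟨convex_Ioi 0, ?_⟩
  intro x hx y hy a b ha hb hab
  simp only [smul_eq_mul]
  have hx0 : (0:ℝ) < x := hx
  have hy0 : (0:ℝ) < y := hy
  have hz : 0 < a * x + b * y := by
    rcases eq_or_lt_of_le ha with ha' | ha'
    · rw [← ha']; simp; nlinarith
    · nlinarith
  obtain ⟨s, hs1, hseq⟩ := heq (a * x + b * y) hz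
  rw [hseq]
  have hxle := hkey s hs1 x hx0
  have hyle := hkey s hs1 y hy0
  have hs0 : (0:ℝ) < s := by linarith
  have expand : (a * x + b * y) / (2 * s) + (s - 1) * c
      = a * (x / (2 * s) + (s - 1) * c) + b * (y / (2 * s) + (s - 1) * c) := by
    have h2s : (2 * s : ℝ) ≠ 0 := by positivity
    field_simp
    linear_combination (-(s - 1) * c * (2 * s)) * hab
  rw [expand]
  have h1 : a * F (Real.sqrt x) ≤ a * (x / (2 * s) + (s - 1) * c) :=
    mul_le_mul_of_nonneg_left hxle ha
  have h2 : b * F (Real.sqrt y) ≤ b * (y / (2 * s) + (s - 1) * c) :=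
    mul_le_mul_of_nonneg_left hyle hb
  linarith
end

section
/- Let U be a function defined on sequences m = (m_p)_{p≥1} of positive reals, taking values in ℝ ∪ {∞}, which is nondecreasing in each coordinate and convex. For β = (β_p)_{p≥1} with β_p > 0 for all p and Σ β_p² < ∞, define G(β) = inf_{t} ( U((β_p²/t_p)_{p≥1}) + (1/2) Σ_{p≥1} t_p ), the infimum over all sequences t = (t_p)_{p≥1} of positive reals. Then G is convex: for every 0 < c < 1 and every such β, β', G((1−c)β + cβ') ≤ (1−c)G(β) + cG(β'). -/
open scoped ENNReal

private lemma cs_ineq (a b s t c : ℝ) (ha : 0 ≤ a) (hb : 0 ≤ b) (hs : 0 < s) (ht : 0 < t)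
    (hc : 0 < c) (hc1 : c < 1) :
    ((1-c)*a + c*b)^2 / ((1-c)*s + c*t) ≤ (1-c)*(a^2/s) + c*(b^2/t) := by
  have h1c : 0 < 1 - c := by linarith
  have hD : 0 < (1-c)*s + c*t := by positivity
  rw [div_le_iff₀ hD, mul_div_assoc', mul_div_assoc', div_add_div _ _ hs.ne' ht.ne', div_mul_eq_mul_div,
    le_div_iff₀ (by positivity : (0:ℝ) < s*t)]
  ring_nf
  nlinarith [mul_nonneg (mul_nonneg (mul_pos h1c hc).le (mul_pos hs ht).le)
      (sq_nonneg (a*t - b*s)), sq_nonneg (a*t-b*s), mul_pos hs ht,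
    mul_nonneg (mul_pos h1c hc).le (sq_nonneg (a*t - b*s))]

private lemma ereal_coe_mul_add {c : ℝ} (hc : 0 < c) (x y : EReal) :
    (c : EReal) * (x + y) = (c : EReal) * x + (c : EReal) * y := by
  induction x using EReal.rec <;> induction y using EReal.rec <;>
    simp_all [EReal.coe_mul_bot_of_pos hc, EReal.coe_mul_top_of_pos hc,
      EReal.top_add_top, EReal.top_add_coe, EReal.coe_add_top,
      ← EReal.coe_add, ← EReal.coe_mul, mul_add]

private noncomputable def mix : ℕ → (ℕ → (ℕ+ → ℝ)) → (ℕ+ → ℝ)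
  | 0, M => M 0
  | (n+1), M => fun p => (1 - (1/2:ℝ)) * M 1 p + (1/2) * mix n (fun k => M (k+1)) p

private lemma mix_pos : ∀ (n : ℕ) (M : ℕ → (ℕ+ → ℝ)), (∀ k p, 0 < M k p) → ∀ p, 0 < mix n M p
  | 0, M, h, p => h 0 p
  | (n+1), M, h, p => by
    have h1 := mix_pos n (fun k => M (k+1)) (fun k p => h (k+1) p) p
    have h2 := h 1 p
    show 0 < (1 - (1/2:ℝ)) * M 1 p + (1/2) * mix n (fun k => M (k+1)) p
    nlinarith

private lemma mix_bound (U : (ℕ+ → ℝ) → EReal)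
    (hUconv : ∀ m m' : ℕ+ → ℝ, (∀ p, 0 < m p) → (∀ p, 0 < m' p) →
      ∀ c : ℝ, 0 < c → c < 1 →
      U (fun p => (1 - c) * m p + c * m' p) ≤
        (((1 - c : ℝ) : EReal) * U m + ((c : ℝ) : EReal) * U m')) :
    ∀ (n j : ℕ) (M : ℕ → (ℕ+ → ℝ)), (∀ k p, 0 < M k p) →
      (∀ k, U (M k) ≤ ((-(4:ℝ)^(k+j) : ℝ) : EReal)) →
      U (mix n M) ≤ ((-((2:ℝ)^n * 4^j) : ℝ) : EReal) := by
  intro n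
  induction n with
  | zero =>
    intro j M hpos hle
    simpa [mix] using hle 0
  | succ n ih =>
    intro j M hpos hle
    have hM' : ∀ k p, 0 < M (k+1) p := fun k p => hpos (k+1) p
    have hle' : ∀ k, U (M (k+1)) ≤ ((-(4:ℝ)^(k+(j+1)) : ℝ) : EReal) := by
      intro k
      have := hle (k+1)
      rwa [show k+1+j = k+(j+1) by omega] at this
    have ihn := ih (j+1) (fun k => M (k+1)) hM' hle'
    have hconv := hUconv (M 1) (mix n (fun k => M (k+1))) (fun p => hpos 1 p)
      (mix_pos n _ hM') (1/2) (by norm_num) (by norm_num)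
    have step1 : U (mix (n+1) M) ≤
        (((1 - (1/2:ℝ)) : ℝ) : EReal) * U (M 1) + (((1/2:ℝ) : ℝ) : EReal) * U (mix n (fun k => M (k+1))) := hconv
    have half_nonneg : (0:EReal) ≤ (((1/2:ℝ)) : EReal) := EReal.coe_nonneg.2 (by norm_num)
    have half_nonneg' : (0:EReal) ≤ (((1 - (1/2:ℝ))) : EReal) := EReal.coe_nonneg.2 (by norm_num)
    have step2 : (((1 - (1/2:ℝ)) : ℝ) : EReal) * U (M 1) + (((1/2:ℝ) : ℝ) : EReal) * U (mix n (fun k => M (k+1)))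
        ≤ (((1 - (1/2:ℝ)) : ℝ) : EReal) * ((-(4:ℝ)^(1+j) : ℝ) : EReal)
          + (((1/2:ℝ) : ℝ) : EReal) * ((-((2:ℝ)^n * 4^(j+1)) : ℝ) : EReal) :=
      add_le_add (mul_le_mul_of_nonneg_left (hle 1) half_nonneg')
        (mul_le_mul_of_nonneg_left ihn half_nonneg)
    refine (step1.trans step2).trans ?_
    rw [← EReal.coe_mul, ← EReal.coe_mul, ← EReal.coe_add, EReal.coe_le_coe_iff]
    have h4 : (0:ℝ) < 4^j := by positivity
    have h2n : (0:ℝ) < 2^n := by positivity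
    rw [pow_add, pow_add, pow_succ]
    ring_nf
    nlinarith [h4, h2n]

private lemma G_ne_bot (U : (ℕ+ → ℝ) → EReal)
    (hUmono : ∀ m m' : ℕ+ → ℝ, (∀ p, 0 < m p) → (∀ p, 0 < m' p) →
      (∀ p, m p ≤ m' p) → U m ≤ U m')
    (hUconv : ∀ m m' : ℕ+ → ℝ, (∀ p, 0 < m p) → (∀ p, 0 < m' p) →
      ∀ c : ℝ, 0 < c → c < 1 →
      U (fun p => (1 - c) * m p + c * m' p) ≤
        (((1 - c : ℝ) : EReal) * U m + ((c : ℝ) : EReal) * U m'))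
    (hne : ∀ m : ℕ+ → ℝ, (∀ p, 0 < m p) → U m ≠ ⊥)
    (γ : ℕ+ → ℝ) (hγ : ∀ p, 0 < γ p) :
    (⨅ t ∈ {t : ℕ+ → ℝ | ∀ p, 0 < t p},
        (U (fun p => (γ p) ^ 2 / t p) +
          ((((∑' p : ℕ+, ENNReal.ofReal (t p)) / 2 : ℝ≥0∞) : EReal)))) ≠ ⊥ := by
  intro h
  have hex : ∀ n : ℕ, ∃ m : ℕ+ → ℝ, (∀ p, 0 < m p) ∧ U m ≤ ((-(4:ℝ)^n : ℝ) : EReal) := by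
    intro n
    have hlt : (⨅ t ∈ {t : ℕ+ → ℝ | ∀ p, 0 < t p},
        (U (fun p => (γ p) ^ 2 / t p) +
          ((((∑' p : ℕ+, ENNReal.ofReal (t p)) / 2 : ℝ≥0∞) : EReal)))) < ((-(4:ℝ)^n : ℝ) : EReal) := by
      rw [h]; exact bot_lt_iff_ne_bot.2 (EReal.coe_ne_bot _)
    simp only [iInf_lt_iff] at hlt
    obtain ⟨t, ht, hval⟩ := hlt
    refine ⟨fun p => (γ p)^2 / t p, fun p => div_pos (pow_pos (hγ p) 2) (ht p), ?_⟩
    refine le_trans ?_ hval.le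
    exact le_add_of_nonneg_right (EReal.coe_ennreal_nonneg _)
  choose M hMpos hMle using hex
  have lowpos : ∀ p, 0 < (1/2:ℝ) * M 1 p := fun p => by have := hMpos 1 p; linarith
  refine hne (fun p => (1/2:ℝ) * M 1 p) lowpos ?_
  rw [EReal.eq_bot_iff_forall_lt]
  intro y
  obtain ⟨n, hn⟩ := pow_unbounded_of_one_lt (-y) (by norm_num : (1:ℝ) < 2)
  have hM' : ∀ k p, 0 < M (k+1) p := fun k p => hMpos (k+1) p
  have h1 : U (fun p => (1/2:ℝ) * M 1 p) ≤ U (mix (n+1) M) := by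
    refine hUmono _ _ lowpos (mix_pos (n+1) M hMpos) (fun p => ?_)
    have hmp := mix_pos n (fun k => M (k+1)) hM' p
    show (1/2:ℝ) * M 1 p ≤ (1 - (1/2:ℝ)) * M 1 p + (1/2) * mix n (fun k => M (k+1)) p
    nlinarith
  have h2 : U (mix (n+1) M) ≤ ((-((2:ℝ)^(n+1) * 4^0) : ℝ) : EReal) := by
    refine mix_bound U hUconv (n+1) 0 M hMpos (fun k => ?_)
    simpa using hMle k
  refine lt_of_le_of_lt (h1.trans h2) ?_
  rw [EReal.coe_lt_coe_iff]
  have h2n : (2:ℝ)^n ≤ 2^(n+1) := by rw [pow_succ]; nlinarith [pow_pos (by norm_num : (0:ℝ) < 2) n]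
  simp only [pow_zero, mul_one]
  linarith

/-- General convexity mechanism: if `U` is nondecreasing in each coordinate and convex
on positive sequences, then `G(β) = inf_t ( U(β²/t) + (1/2) Σ t_p )` is convex in `β`
on the set of positive square-summable sequences. -/
theorem convexity_of_inf_representation
    (U : (ℕ+ → ℝ) → EReal)
    (hUmono : ∀ m m' : ℕ+ → ℝ, (∀ p, 0 < m p) → (∀ p, 0 < m' p) →
      (∀ p, m p ≤ m' p) → U m ≤ U m')
    (hUconv : ∀ m m' : ℕ+ → ℝ, (∀ p, 0 < m p) → (∀ p, 0 < m' p) →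
      ∀ c : ℝ, 0 < c → c < 1 →
      U (fun p => (1 - c) * m p + c * m' p) ≤
        (((1 - c : ℝ) : EReal) * U m + ((c : ℝ) : EReal) * U m'))
    (G : (ℕ+ → ℝ) → EReal)
    (hG : ∀ β : ℕ+ → ℝ, G β =
      ⨅ t ∈ {t : ℕ+ → ℝ | ∀ p, 0 < t p},
        (U (fun p => (β p) ^ 2 / t p) +
          ((((∑' p : ℕ+, ENNReal.ofReal (t p)) / 2 : ℝ≥0∞) : EReal)))) :
    ∀ c : ℝ, 0 < c → c < 1 →
    ∀ β β' : ℕ+ → ℝ,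
      ((∀ p, 0 < β p) ∧ Summable fun p => (β p) ^ 2) →
      ((∀ p, 0 < β' p) ∧ Summable fun p => (β' p) ^ 2) →
      G (fun p => (1 - c) * β p + c * β' p) ≤
        (((1 - c : ℝ) : EReal) * G β + ((c : ℝ) : EReal) * G β') := by
  intro c hc hc1 β β' hβ hβ'
  obtain ⟨hβpos, -⟩ := hβ
  obtain ⟨hβ'pos, -⟩ := hβ'
  have h1c : 0 < 1 - c := by linarith
  set mid : ℕ+ → ℝ := fun p => (1 - c) * β p + c * β' p with hmiddef
  have hmidpos : ∀ p, 0 < mid p := fun p =>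
    add_pos (mul_pos h1c (hβpos p)) (mul_pos hc (hβ'pos p))
  -- pairwise key inequality
  have key : ∀ t t' : ℕ+ → ℝ, (∀ p, 0 < t p) → (∀ p, 0 < t' p) →
      G mid ≤ ((1 - c : ℝ) : EReal) *
          (U (fun p => (β p) ^ 2 / t p) +
            ((((∑' p : ℕ+, ENNReal.ofReal (t p)) / 2 : ℝ≥0∞) : EReal)))
        + ((c : ℝ) : EReal) *
          (U (fun p => (β' p) ^ 2 / t' p) +
            ((((∑' p : ℕ+, ENNReal.ofReal (t' p)) / 2 : ℝ≥0∞) : EReal))) := by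
    intro t t' ht ht'
    set t'' : ℕ+ → ℝ := fun p => (1 - c) * t p + c * t' p with ht''def
    have ht'' : ∀ p, 0 < t'' p := fun p =>
      add_pos (mul_pos h1c (ht p)) (mul_pos hc (ht' p))
    have hstep0 : G mid ≤ U (fun p => (mid p) ^ 2 / t'' p) +
        ((((∑' p : ℕ+, ENNReal.ofReal (t'' p)) / 2 : ℝ≥0∞) : EReal) ) := by
      rw [hG]
      exact iInf₂_le t'' ht''
    have hU1 : U (fun p => (mid p) ^ 2 / t'' p) ≤
        U (fun p => (1 - c) * ((β p)^2 / t p) + c * ((β' p)^2 / t' p)) :=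
      hUmono _ _ (fun p => div_pos (pow_pos (hmidpos p) 2) (ht'' p))
        (fun p => add_pos (mul_pos h1c (div_pos (pow_pos (hβpos p) 2) (ht p)))
          (mul_pos hc (div_pos (pow_pos (hβ'pos p) 2) (ht' p))))
        (fun p => cs_ineq (β p) (β' p) (t p) (t' p) c (hβpos p).le (hβ'pos p).le
          (ht p) (ht' p) hc hc1)
    have hU2 := hUconv (fun p => (β p)^2 / t p) (fun p => (β' p)^2 / t' p)
      (fun p => div_pos (pow_pos (hβpos p) 2) (ht p))
      (fun p => div_pos (pow_pos (hβ'pos p) 2) (ht' p)) c hc hc1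
    have hsum : ((((∑' p : ℕ+, ENNReal.ofReal (t'' p)) / 2 : ℝ≥0∞)) : EReal)
        = ((1 - c : ℝ) : EReal) * ((((∑' p : ℕ+, ENNReal.ofReal (t p)) / 2 : ℝ≥0∞)) : EReal)
          + ((c : ℝ) : EReal) * ((((∑' p : ℕ+, ENNReal.ofReal (t' p)) / 2 : ℝ≥0∞)) : EReal) := by
      have e1 : ∀ p : ℕ+, ENNReal.ofReal (t'' p)
          = ENNReal.ofReal (1 - c) * ENNReal.ofReal (t p)
            + ENNReal.ofReal c * ENNReal.ofReal (t' p) := by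
        intro p
        rw [← ENNReal.ofReal_mul h1c.le, ← ENNReal.ofReal_mul hc.le,
          ← ENNReal.ofReal_add (mul_pos h1c (ht p)).le (mul_pos hc (ht' p)).le]
      rw [tsum_congr e1, ENNReal.tsum_add, ENNReal.tsum_mul_left, ENNReal.tsum_mul_left,
        ENNReal.add_div]
      simp only [div_eq_mul_inv, mul_assoc, EReal.coe_ennreal_add, EReal.coe_ennreal_mul,
        EReal.coe_ennreal_ofReal, max_eq_left h1c.le, max_eq_left hc.le]
    calc G mid ≤ U (fun p => (mid p) ^ 2 / t'' p) +
        ((((∑' p : ℕ+, ENNReal.ofReal (t'' p)) / 2 : ℝ≥0∞) : EReal)) := hstep0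
      _ ≤ (((1 - c : ℝ) : EReal) * U (fun p => (β p)^2 / t p)
            + ((c : ℝ) : EReal) * U (fun p => (β' p)^2 / t' p))
          + (((1 - c : ℝ) : EReal) * ((((∑' p : ℕ+, ENNReal.ofReal (t p)) / 2 : ℝ≥0∞)) : EReal)
            + ((c : ℝ) : EReal) * ((((∑' p : ℕ+, ENNReal.ofReal (t' p)) / 2 : ℝ≥0∞)) : EReal)) :=
          add_le_add (hU1.trans hU2) (le_of_eq hsum)
      _ = _ := by
          rw [ereal_coe_mul_add h1c, ereal_coe_mul_add hc]
          abel
  by_cases hbot : ∃ m : ℕ+ → ℝ, (∀ p, 0 < m p) ∧ U m = ⊥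
  · obtain ⟨m, hm, hUm⟩ := hbot
    have hGbot : G mid ≤ ⊥ := by
      rw [hG]
      refine le_trans (iInf₂_le (fun p => (mid p)^2 / m p)
        (fun p => div_pos (pow_pos (hmidpos p) 2) (hm p))) ?_
      have harg : (fun p => (mid p) ^ 2 / ((mid p)^2 / m p)) = m := by
        funext p
        rw [div_div_eq_mul_div, mul_comm, mul_div_assoc,
          div_self (pow_pos (hmidpos p) 2).ne', mul_one]
      rw [harg, hUm, EReal.bot_add]
    exact hGbot.trans bot_le
  · push_neg at hbot
    have hne : ∀ m : ℕ+ → ℝ, (∀ p, 0 < m p) → U m ≠ ⊥ := hbot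
    have ha : G β ≠ ⊥ := by rw [hG]; exact G_ne_bot U hUmono hUconv hne β hβpos
    have hb : G β' ≠ ⊥ := by rw [hG]; exact G_ne_bot U hUmono hUconv hne β' hβ'pos
    by_cases hatop : G β = ⊤
    · have hcb : ((c : ℝ) : EReal) * G β' ≠ ⊥ := by
        by_cases hbtop : G β' = ⊤
        · rw [hbtop, EReal.coe_mul_top_of_pos hc]; exact top_ne_bot
        · rw [← EReal.coe_toReal hbtop hb, ← EReal.coe_mul]; exact EReal.coe_ne_bot _
      rw [hatop, EReal.coe_mul_top_of_pos h1c, EReal.top_add_of_ne_bot hcb]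
      exact le_top
    by_cases hbtop : G β' = ⊤
    · have hca : ((1 - c : ℝ) : EReal) * G β ≠ ⊥ := by
        rw [← EReal.coe_toReal hatop ha, ← EReal.coe_mul]; exact EReal.coe_ne_bot _
      rw [hbtop, EReal.coe_mul_top_of_pos hc, EReal.add_top_of_ne_bot hca]
      exact le_top
    set ra := (G β).toReal with hra
    set rb := (G β').toReal with hrb
    have haeq : G β = (ra : EReal) := (EReal.coe_toReal hatop ha).symm
    have hbeq : G β' = (rb : EReal) := (EReal.coe_toReal hbtop hb).symm
    have hfinal : ∀ ε : ℝ, 0 < ε → G mid ≤ (((1 - c) * ra + c * rb + ε : ℝ) : EReal) := by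
      intro ε hε
      have hlta : G β < ((ra + ε : ℝ) : EReal) := by
        rw [haeq]; exact_mod_cast (by linarith : ra < ra + ε)
      have hltb : G β' < ((rb + ε : ℝ) : EReal) := by
        rw [hbeq]; exact_mod_cast (by linarith : rb < rb + ε)
      rw [hG] at hlta hltb
      simp only [iInf_lt_iff] at hlta hltb
      obtain ⟨t, ht, hAt⟩ := hlta
      obtain ⟨t', ht', hBt⟩ := hltb
      refine (key t t' ht ht').trans ?_
      have m1 := mul_le_mul_of_nonneg_left hAt.le
        (EReal.coe_nonneg.2 h1c.le : (0:EReal) ≤ ((1 - c : ℝ) : EReal))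
      have m2 := mul_le_mul_of_nonneg_left hBt.le
        (EReal.coe_nonneg.2 hc.le : (0:EReal) ≤ ((c : ℝ) : EReal))
      refine (add_le_add m1 m2).trans (le_of_eq ?_)
      rw [← EReal.coe_mul, ← EReal.coe_mul, ← EReal.coe_add, EReal.coe_eq_coe_iff]
      ring
    have hmain : G mid ≤ (((1 - c) * ra + c * rb : ℝ) : EReal) := by
      by_contra hcon
      push_neg at hcon
      obtain ⟨y, hy1, hy2⟩ := EReal.exists_between_coe_real hcon
      have hy1' : (1 - c) * ra + c * rb < y := EReal.coe_lt_coe_iff.1 hy1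
      have := hfinal (y - ((1 - c) * ra + c * rb)) (by linarith)
      rw [show (1 - c) * ra + c * rb + (y - ((1 - c) * ra + c * rb)) = y by ring] at this
      exact absurd hy2 (not_lt.2 this)
    rw [haeq, hbeq, ← EReal.coe_mul, ← EReal.coe_mul, ← EReal.coe_add]
    exact hmain
end
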